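/- Fix t ∈ [0,1), n with 2^N ≤ n < 2^{N+1}, and m = ∑_{i=0}^{N−1} t_{i+1} 2^i. For each 0 ≤ i ≤ N−1, ∫_{I_i \ I_{i+1}} |D̃_n^{(t)}| dμ = max(α_i(n), 2 α_i(m)) / 2^{i+1}, where α_i(k) = |∑_{j=0}^{i−1} k_j 2^j − k_i 2^i|. -/

import Mathlib

open MeasureTheory Finset

noncomputable section

/-- The dyadic group: countable product of ℤ/2. -/
abbrev G := ℕ → ZMod 2

/-- Binary digits of a real number, as an element of the dyadic group. -/
def toG (x : ℝ) : G := fun n => ((⌊x * 2 ^ (n + 1)⌋ : ℤ) : ZMod 2)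

/-- Haar (product) measure on the dyadic group, realized as the pushforward
of Lebesgue measure on `[0,1)` under the binary digit map. -/
def muG : Measure G := (volume.restrict (Set.Ico (0:ℝ) 1)).map toG

/-- Walsh–Paley functions. -/
def walsh (m : ℕ) (x : G) : ℝ :=
  ∏ k ∈ Finset.range m, if m.testBit k then (-1 : ℝ) ^ ((x k).val) else 1

/-- Walsh–Dirichlet kernel. -/
def Dir (n : ℕ) (x : G) : ℝ := ∑ k ∈ Finset.range n, walsh k x

/-- Dyadic interval `I_n` of rank `n` about `0`. -/
def Iset (n : ℕ) : Set G := {x | ∀ i < n, x i = 0}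

/-- `k`-th binary digit of `n`, as a natural number. -/
def bit (n k : ℕ) : ℕ := (n.testBit k).toNat

/-- `α_i(n) = |∑_{k<i} n_k 2^k − n_i 2^i|`. -/
def alpha (n i : ℕ) : ℤ :=
  |(∑ k ∈ Finset.range i, (bit n k : ℤ) * 2 ^ k) - (bit n i : ℤ) * 2 ^ i|

/-- Binary variation `V(n) = n_0 + ∑_{k≥1} |n_k − n_{k−1}|`. -/
def V (n : ℕ) : ℕ :=
  bit n 0 + ∑ k ∈ Finset.range n, if n.testBit (k+1) ≠ n.testBit k then 1 else 0

/-- `A(n)`: indices where consecutive binary digits differ (with `n_{−1} = 0`). -/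
def Aset (n : ℕ) : Finset ℕ :=
  (Finset.range (n+1)).filter
    (fun i => if i = 0 then n.testBit 0 else n.testBit i ≠ n.testBit (i-1))

/-- `S(n) = ∑_{i ∈ A(n)} α_i(n)/2^{i+1}`. -/
def S (n : ℕ) : ℝ := ∑ i ∈ Aset n, (alpha n i : ℝ) / 2 ^ (i+1)

/-- `j`-th binary digit of a real number `t ∈ [0,1)`. -/
def tdig (t : ℝ) (j : ℕ) : ℕ := (⌊t * 2 ^ (j+1)⌋ % 2).toNat

/-- `m = ∑_{i=0}^{N-1} t_{i+1} 2^i`. -/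
def mOf (t : ℝ) (N : ℕ) : ℕ := ∑ i ∈ Finset.range N, tdig t (i+1) * 2 ^ i

/-- Conjugate Walsh–Dirichlet kernel
`D̃_n^{(t)} = D_n − 2 w_m D_m − 2 t_{N+1}(D_n − D_{2^N})` where `m = mOf t N`. -/
def Dconj (t : ℝ) (N n : ℕ) (x : G) : ℝ :=
  Dir n x - 2 * walsh (mOf t N) x * Dir (mOf t N) x
    - 2 * (tdig t (N+1) : ℝ) * (Dir n x - Dir (2^N) x)

/-- Lebesgue constant of the conjugate transform. -/
def Leb (t : ℝ) (N n : ℕ) : ℝ := ∫ x, |Dconj t N n x| ∂muG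

/-- `T(a,b) = {i : 1 ≤ i ≤ N−1, a_i ≠ a_{i−1}, b_i = b_{i−1}}`. -/
def Tset (N a b : ℕ) : Finset ℕ :=
  (Finset.Icc 1 (N-1)).filter
    (fun i => a.testBit i ≠ a.testBit (i-1) ∧ b.testBit i = b.testBit (i-1))
section Helpers

lemma zmod2_cases (z : ZMod 2) : z = 0 ∨ z = 1 := by revert z; decide

lemma walsh_mul_self (n : ℕ) (y : G) : walsh n y * walsh n y = 1 := by
  unfold walsh
  rw [← Finset.prod_mul_distrib]
  apply Finset.prod_eq_one
  intro k _
  by_cases h : n.testBit k <;> simp [h, ← pow_add, Even.neg_one_pow ⟨(y k).val, rfl⟩]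

lemma walsh_eq_one_or (n : ℕ) (y : G) : walsh n y = 1 ∨ walsh n y = -1 :=
  mul_self_eq_one_iff.mp (walsh_mul_self n y)

lemma abs_walsh (n : ℕ) (y : G) : |walsh n y| = 1 := by
  rcases walsh_eq_one_or n y with h | h <;> rw [h] <;> norm_num

lemma walsh_eq_prod {n M : ℕ} (h : n < 2 ^ M) (y : G) :
    walsh n y = ∏ k ∈ Finset.range M, if n.testBit k then (-1 : ℝ) ^ ((y k).val) else 1 := by
  unfold walsh
  rcases le_total n M with hnM | hnM
  · apply Finset.prod_subset (Finset.range_subset_range.2 hnM)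
    intro k _ hk'
    have hk : n ≤ k := by
      by_contra hc; exact hk' (Finset.mem_range.2 (by omega))
    have : n.testBit k = false :=
      Nat.testBit_lt_two_pow (lt_of_le_of_lt hk (Nat.lt_two_pow_self (n := k)))
    simp [this]
  · refine (Finset.prod_subset (Finset.range_subset_range.2 hnM) ?_).symm
    intro k _ hk'
    have hk : M ≤ k := by
      by_contra hc; exact hk' (Finset.mem_range.2 (by omega))
    have : n.testBit k = false :=
      Nat.testBit_lt_two_pow (lt_of_lt_of_le h (Nat.pow_le_pow_right (by norm_num) hk))
    simp [this]

lemma walsh_two_pow (j : ℕ) (y : G) : walsh (2^j) y = (-1 : ℝ) ^ ((y j).val) := by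
  unfold walsh
  rw [Finset.prod_eq_single j]
  · simp [Nat.testBit_two_pow]
  · intro b _ hb; simp [Nat.testBit_two_pow, Ne.symm hb]
  · intro h; exact absurd (Finset.mem_range.2 (Nat.lt_two_pow_self (n := j))) h

lemma walsh_two_pow_add {j l : ℕ} (hl : l < 2^j) (y : G) :
    walsh (2^j + l) y = walsh (2^j) y * walsh l y := by
  have h1 : 2^j + l < 2^(j+1) := by rw [pow_succ]; omega
  rw [walsh_eq_prod h1 y, Finset.prod_range_succ, walsh_two_pow,
    walsh_eq_prod hl y, Nat.testBit_two_pow_add_eq, Nat.testBit_lt_two_pow hl]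
  simp only [Bool.not_false, if_true]
  rw [mul_comm]
  congr 1
  refine Finset.prod_congr rfl fun k hk => ?_
  rw [Nat.testBit_two_pow_add_gt (Finset.mem_range.1 hk) l]

lemma walsh_eq_one {i k : ℕ} (y : G) (h0 : ∀ l < i, y l = 0) (hk : k < 2^i) :
    walsh k y = 1 := by
  apply Finset.prod_eq_one
  intro l _
  by_cases hb : k.testBit l
  · have h2 : 2^l ≤ k := Nat.ge_two_pow_of_testBit hb
    have hl : l < i := by
      by_contra hc
      exact absurd (lt_of_le_of_lt h2 hk)
        (not_lt.2 (Nat.pow_le_pow_right (by norm_num) (by omega)))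
    simp [hb, h0 l hl]
  · simp [hb]

lemma Dir_small {i : ℕ} (n : ℕ) (y : G) (h0 : ∀ l < i, y l = 0) (hn : n ≤ 2^i) :
    Dir n y = n := by
  unfold Dir
  rw [Finset.sum_congr rfl
    (fun k hk => walsh_eq_one y h0 (lt_of_lt_of_le (Finset.mem_range.1 hk) hn))]
  simp

lemma Dir_two_pow_add {j r : ℕ} (hr : r ≤ 2^j) (y : G) :
    Dir (2^j + r) y = Dir (2^j) y + walsh (2^j) y * Dir r y := by
  unfold Dir
  have hsplit : ∑ k ∈ Finset.range (2^j + r), walsh k y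
      = ∑ k ∈ Finset.range (2^j), walsh k y
        + ∑ k ∈ Finset.Ico (2^j) (2^j+r), walsh k y := by
    rw [Finset.range_eq_Ico,
      ← Finset.sum_Ico_consecutive _ (Nat.zero_le _) (Nat.le_add_right (2^j) r), ← Finset.range_eq_Ico]
  rw [hsplit, Finset.sum_Ico_eq_sum_range, add_tsub_cancel_left, Finset.mul_sum]
  congr 1
  refine Finset.sum_congr rfl fun l hl => ?_
  exact walsh_two_pow_add (lt_of_lt_of_le (Finset.mem_range.1 hl) hr) y

lemma Dir_two_pow (j : ℕ) (y : G) :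
    Dir (2^j) y = if ∀ l < j, y l = 0 then (2:ℝ)^j else 0 := by
  induction j with
  | zero => simp [Dir, walsh]
  | succ j ih =>
    have h2 : (2:ℕ)^(j+1) = 2^j + 2^j := by rw [pow_succ]; ring
    rw [h2, Dir_two_pow_add (le_refl _) y, ih, walsh_two_pow]
    rcases zmod2_cases (y j) with h | h
    · have hval : (y j).val = 0 := by rw [h]; rfl
      by_cases hall : ∀ l < j, y l = 0
      · have hall' : ∀ l < j+1, y l = 0 := by
          intro l hl
          rcases Nat.lt_succ_iff_lt_or_eq.1 hl with h' | h'
          · exact hall l h'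
          · rw [h']; exact h
        rw [if_pos hall, if_pos hall', hval, pow_zero, one_mul, pow_succ]
        ring
      · have hall' : ¬ ∀ l < j+1, y l = 0 := fun h' =>
          hall fun l hl => h' l (hl.trans (Nat.lt_succ_self _))
        rw [if_neg hall, if_neg hall']
        ring
    · have hval : (y j).val = 1 := by rw [h]; rfl
      have hall' : ¬ ∀ l < j+1, y l = 0 := by
        intro h'
        have := h' j (Nat.lt_succ_self _)
        rw [this] at h
        exact absurd h (by decide)
      rw [if_neg hall', hval, pow_one]
      by_cases hall : ∀ l < j, y l = 0
      · rw [if_pos hall]; ring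
      · rw [if_neg hall]; ring

lemma sum_bits {n i : ℕ} (hn : n < 2^i) :
    ∑ k ∈ Finset.range i, bit n k * 2^k = n := by
  induction i generalizing n with
  | zero => simp at hn ⊢; omega
  | succ i ih =>
    rw [Finset.sum_range_succ']
    have hbit : ∀ k, bit n (k+1) = bit (n/2) k := fun k => by
      unfold bit; rw [Nat.testBit_succ]
    have h0 : bit n 0 * 2^0 = n % 2 := by
      unfold bit; rw [Nat.testBit_zero]
      rcases Nat.mod_two_eq_zero_or_one n with h | h <;> simp [h]
    have h2 : n / 2 < 2^i := by
      rw [pow_succ] at hn; omega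
    simp only [hbit, pow_succ, ← mul_assoc]
    rw [← Finset.sum_mul, ih h2, h0]
    omega

end Helpers
/-- Signed version of `alpha`, real-valued. -/
def gR (n i : ℕ) : ℝ :=
  (∑ k ∈ Finset.range i, (bit n k : ℝ) * 2^k) - (bit n i : ℝ) * 2^i

lemma sum_bits_real {n i : ℕ} (hn : n < 2^i) :
    ∑ k ∈ Finset.range i, (bit n k : ℝ) * 2^k = n := by
  have h2 := congrArg (fun m : ℕ => (m:ℝ)) (sum_bits hn)
  push_cast at h2
  exact h2

lemma gR_small {n i : ℕ} (hn : n < 2^i) : gR n i = n := by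
  unfold gR
  have hb : bit n i = 0 := by unfold bit; rw [Nat.testBit_lt_two_pow hn]; rfl
  rw [hb, sum_bits_real hn]
  norm_num

lemma Dir_shell {i : ℕ} {y : G} (h0 : ∀ l < i, y l = 0) (h1 : y i = 1) (n : ℕ) :
    Dir n y = walsh n y * gR n i := by
  induction n using Nat.strong_induction_on with
  | _ n ih =>
  rcases Nat.lt_or_ge n (2^i) with hn | hn
  · rw [Dir_small n y h0 (le_of_lt hn), walsh_eq_one y h0 hn, one_mul, gR_small hn]
  · have hn0 : n ≠ 0 := by have : 0 < 2^i := Nat.pow_pos (n := i) (by norm_num); omega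
    obtain ⟨j, hj1, hj2⟩ : ∃ j, 2^j ≤ n ∧ n < 2^(j+1) :=
      ⟨Nat.log2 n, Nat.log2_self_le hn0, Nat.lt_log2_self⟩
    obtain ⟨r, hrn, hr2⟩ : ∃ r, n = 2^j + r ∧ r < 2^j := by
      refine ⟨n - 2^j, by omega, ?_⟩
      rw [pow_succ] at hj2; omega
    have hij : i ≤ j := by
      by_contra hc
      push_neg at hc
      have : 2^(j+1) ≤ 2^i := Nat.pow_le_pow_right (by norm_num) hc
      omega
    have hbits : ∀ k < j, n.testBit k = r.testBit k := fun k hk => by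
      rw [hrn, Nat.testBit_two_pow_add_gt hk]
    rcases eq_or_lt_of_le hij with hji | hji
    · -- j = i
      subst hji
      have hbi : bit n i = 1 := by
        unfold bit; rw [hrn, Nat.testBit_two_pow_add_eq, Nat.testBit_lt_two_pow hr2]; rfl
      have hsum : ∑ k ∈ Finset.range i, (bit n k : ℝ) * 2^k = r := by
        rw [Finset.sum_congr rfl (fun k hk => by
          unfold bit; rw [hbits k (Finset.mem_range.1 hk)])]
        exact sum_bits_real hr2
      have hg : gR n i = (r : ℝ) - 2^i := by
        unfold gR
        rw [hbi, hsum]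
        push_cast
        ring
      rw [hrn, Dir_two_pow_add (le_of_lt hr2) y, walsh_two_pow_add hr2 y, ← hrn]
      rw [Dir_two_pow, if_pos h0, walsh_two_pow, h1,
        Dir_small r y h0 (le_of_lt hr2), walsh_eq_one y h0 hr2, hg]
      have hv : ((1 : ZMod 2)).val = 1 := rfl
      rw [hv]
      ring
    · -- j > i
      have hDir2 : Dir (2^j) y = 0 := by
        rw [Dir_two_pow, if_neg]
        intro hc
        have := hc i hji
        rw [this] at h1
        exact absurd h1 (by decide)
      have hrlt : r < n := by
        have : 0 < 2^j := Nat.pow_pos (n := j) (by norm_num)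
        omega
      have hgg : gR n i = gR r i := by
        unfold gR bit
        rw [hbits i hji]
        congr 1
        refine Finset.sum_congr rfl fun k hk => ?_
        rw [hbits k ((Finset.mem_range.1 hk).trans hji)]
      rw [hrn, Dir_two_pow_add (le_of_lt hr2) y, walsh_two_pow_add hr2 y,
        hDir2, ih r hrlt, ← hrn, hgg]
      ring
lemma tdig_le_one (t : ℝ) (j : ℕ) : tdig t j ≤ 1 := by
  unfold tdig
  have h1 : 0 ≤ ⌊t * 2^(j+1)⌋ % 2 := Int.emod_nonneg _ two_ne_zero
  have h2 : ⌊t * 2^(j+1)⌋ % 2 < 2 := Int.emod_lt_of_pos _ (by norm_num)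
  omega

lemma sum_range_two_pow (N : ℕ) : ∑ x ∈ Finset.range N, 2^x = 2^N - 1 := by
  induction N with
  | zero => rfl
  | succ N ih => rw [Finset.sum_range_succ, ih]; have := Nat.one_le_two_pow (n := N); omega

lemma mOf_lt (t : ℝ) (N : ℕ) : mOf t N < 2^N := by
  unfold mOf
  have h : ∀ i ∈ Finset.range N, tdig t (i+1) * 2^i ≤ 1 * 2^i := fun i _ =>
    Nat.mul_le_mul_right _ (tdig_le_one t (i+1))
  calc ∑ i ∈ Finset.range N, tdig t (i+1) * 2^i ≤ ∑ i ∈ Finset.range N, 1 * 2^i :=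
        Finset.sum_le_sum h
    _ = 2^N - 1 := by
        simp only [one_mul]
        exact sum_range_two_pow N
    _ < 2^N := by have := Nat.one_le_two_pow (n := N); omega

lemma abs_gR (n i : ℕ) : |gR n i| = (alpha n i : ℝ) := by
  unfold gR alpha
  push_cast [Int.cast_abs]
  rfl

lemma abs_pair (a b : ℝ) : |a - b| + |a + b| = 2 * max |a| |b| := by
  rcases abs_cases a with ⟨ha1, ha2⟩ | ⟨ha1, ha2⟩ <;>
    rcases abs_cases b with ⟨hb1, hb2⟩ | ⟨hb1, hb2⟩ <;>
      rcases abs_cases (a - b) with ⟨h1, h2⟩ | ⟨h1, h2⟩ <;>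
        rcases abs_cases (a + b) with ⟨h3, h4⟩ | ⟨h3, h4⟩ <;>
          rcases max_cases |a| |b| with ⟨h5, h6⟩ | ⟨h5, h6⟩ <;>
            rw [h1, h3, h5] <;> linarith

lemma Dconj_shell {t : ℝ} {N n i : ℕ} (hi : i < N) {y : G}
    (h0 : ∀ l < i, y l = 0) (hy : y i = 1) :
    Dconj t N n y
      = (1 - 2 * (tdig t (N+1) : ℝ)) * walsh n y * gR n i - 2 * gR (mOf t N) i := by
  unfold Dconj
  rw [Dir_shell h0 hy n, Dir_shell h0 hy (mOf t N), Dir_two_pow, if_neg]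
  · have hw := walsh_mul_self (mOf t N) y
    linear_combination (-2 * gR (mOf t N) i) * hw
  · intro hc
    have := hc i hi
    rw [this] at hy
    exact absurd hy (by decide)

lemma walsh_flip {n N : ℕ} (hN : n.testBit N = true) (hNn : N < n) {y z : G}
    (hyz : ∀ k, k ≠ N → y k = z k) (hyN : y N = 0) (hzN : z N = 1) :
    walsh n z = - walsh n y := by
  unfold walsh
  rw [Finset.prod_eq_mul_prod_sdiff_singleton_of_mem (Finset.mem_range.2 hNn),
    Finset.prod_eq_mul_prod_sdiff_singleton_of_mem (Finset.mem_range.2 hNn)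
      (fun k => if n.testBit k then (-1 : ℝ) ^ ((y k).val) else 1)]
  have hProd : ∏ k ∈ Finset.range n \ {N}, (if n.testBit k then (-1:ℝ)^((z k).val) else 1)
      = ∏ k ∈ Finset.range n \ {N}, (if n.testBit k then (-1:ℝ)^((y k).val) else 1) := by
    refine Finset.prod_congr rfl fun k hk => ?_
    have hkN : k ≠ N := by
      intro hc; subst hc; exact absurd hk (by simp)
    rw [hyz k hkN]
  rw [hProd, hN, hyN, hzN]
  have h1 : ((1 : ZMod 2)).val = 1 := rfl
  have h0' : ((0 : ZMod 2)).val = 0 := rfl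
  rw [h1, h0']
  simp

lemma walsh_congr {n : ℕ} {y z : G} (h : ∀ k, n.testBit k = true → y k = z k) :
    walsh n y = walsh n z := by
  unfold walsh
  refine Finset.prod_congr rfl fun k _ => ?_
  by_cases hb : n.testBit k
  · rw [h k hb]
  · simp [hb]

lemma Dir_congr {n M : ℕ} (hn : n ≤ 2^M) {y z : G} (h : ∀ k < M, y k = z k) :
    Dir n y = Dir n z := by
  unfold Dir
  refine Finset.sum_congr rfl fun k hk => ?_
  refine walsh_congr fun l hl => ?_
  have h2 : 2^l ≤ k := Nat.ge_two_pow_of_testBit hl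
  have hk' : k < 2^M := lt_of_lt_of_le (Finset.mem_range.1 hk) hn
  have : l < M := by
    by_contra hc
    exact absurd (lt_of_le_of_lt h2 hk')
      (not_lt.2 (Nat.pow_le_pow_right (by norm_num) (by omega)))
  exact h l this

lemma Dconj_congr {t : ℝ} {N n : ℕ} (h2 : n < 2^(N+1)) {y z : G}
    (h : ∀ k ≤ N, y k = z k) : Dconj t N n y = Dconj t N n z := by
  have h' : ∀ k < N + 1, y k = z k := fun k hk => h k (by omega)
  have hm : mOf t N ≤ 2^(N+1) := le_of_lt ((mOf_lt t N).trans
    (Nat.pow_lt_pow_right (by norm_num) (Nat.lt_succ_self N)))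
  unfold Dconj
  rw [Dir_congr (le_of_lt h2) h', Dir_congr hm h',
    Dir_congr (show 2^N ≤ 2^(N+1) by exact Nat.pow_le_pow_right (by norm_num) (by omega)) h',
    walsh_congr (n := mOf t N) (fun k hk => h' k ?_)]
  have h2k : 2^k ≤ mOf t N := Nat.ge_two_pow_of_testBit hk
  have := (mOf_lt t N).trans_le (le_refl _)
  have hkN : k < N := by
    by_contra hc
    exact absurd (lt_of_le_of_lt h2k (mOf_lt t N))
      (not_lt.2 (Nat.pow_le_pow_right (by norm_num) (by omega)))
  omega
/-- The sample point of the dyadic piece `[q/2^{N+1}, (q+1)/2^{N+1})`. -/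
def yq (N q : ℕ) : G := fun k => if k ≤ N then ((bit q (N - k) : ℕ) : ZMod 2) else 0

lemma yq_shell_zero {N q i : ℕ} (hq2 : q < 2^(N-i+1)) (hiN : i ≤ N) :
    ∀ l < i, yq N q l = 0 := by
  intro l hl
  unfold yq
  rw [if_pos (by omega : l ≤ N)]
  have hb : q.testBit (N - l) = false := by
    apply Nat.testBit_lt_two_pow
    exact lt_of_lt_of_le hq2 (Nat.pow_le_pow_right (by norm_num) (by omega))
  unfold bit
  rw [hb]
  rfl

lemma yq_shell_one {N q i : ℕ} (hq1 : 2^(N-i) ≤ q) (hq2 : q < 2^(N-i+1)) (hiN : i ≤ N) :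
    yq N q i = 1 := by
  unfold yq
  rw [if_pos hiN]
  obtain ⟨s, hs, hs2⟩ : ∃ s, q = 2^(N-i) + s ∧ s < 2^(N-i) := by
    refine ⟨q - 2^(N-i), by omega, ?_⟩
    rw [pow_succ] at hq2; omega
  have hb : q.testBit (N - i) = true := by
    rw [hs, Nat.testBit_two_pow_add_eq, Nat.testBit_lt_two_pow hs2]
    rfl
  unfold bit
  rw [hb]
  rfl

lemma testBit_N_of_range {N n : ℕ} (h1 : 2^N ≤ n) (h2 : n < 2^(N+1)) :
    n.testBit N = true := by
  obtain ⟨s, hs, hs2⟩ : ∃ s, n = 2^N + s ∧ s < 2^N := by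
    refine ⟨n - 2^N, by omega, ?_⟩
    rw [pow_succ] at h2; omega
  rw [hs, Nat.testBit_two_pow_add_eq, Nat.testBit_lt_two_pow hs2]
  rfl

lemma yq_flip {N n : ℕ} (h1 : 2^N ≤ n) (h2 : n < 2^(N+1)) (p : ℕ) :
    walsh n (yq N (2*p+1)) = - walsh n (yq N (2*p)) := by
  have hN : n.testBit N = true := testBit_N_of_range h1 h2
  have hNn : N < n := lt_of_lt_of_le (Nat.lt_two_pow_self (n := N)) h1
  refine walsh_flip hN hNn (fun k hk => ?_) ?_ ?_
  · unfold yq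
    by_cases hkN : k ≤ N
    · rw [if_pos hkN, if_pos hkN]
      have hNk : N - k ≠ 0 := by omega
      obtain ⟨j, hj⟩ : ∃ j, N - k = j + 1 := ⟨N - k - 1, by omega⟩
      unfold bit
      rw [hj, Nat.testBit_succ, Nat.testBit_succ]
      have e0 : 2*p/2 = p := by omega
      have e1 : (2*p+1)/2 = p := by omega
      rw [e0, e1]
    · rw [if_neg hkN, if_neg hkN]
  · unfold yq bit
    rw [if_pos (le_refl N), Nat.sub_self, Nat.testBit_zero]
    have e : (2*p) % 2 = 0 := by omega
    norm_num [e]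
  · unfold yq bit
    rw [if_pos (le_refl N), Nat.sub_self, Nat.testBit_zero]
    have e : (2*p+1) % 2 = 1 := by omega
    norm_num [e]

lemma eps_abs (t : ℝ) (j : ℕ) : |1 - 2 * (tdig t j : ℝ)| = 1 := by
  have h := tdig_le_one t j
  interval_cases h' : tdig t j <;> norm_num [h']

lemma pair_eq (t : ℝ) {N n i : ℕ} (h1 : 2^N ≤ n) (h2 : n < 2^(N+1)) (hi : i < N)
    {p : ℕ} (hp1 : 2^(N-i-1) ≤ p) (hp2 : p < 2^(N-i)) :
    |Dconj t N n (yq N (2*p))| + |Dconj t N n (yq N (2*p+1))|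
      = 2 * max (alpha n i : ℝ) (2 * (alpha (mOf t N) i : ℝ)) := by
  have hpow : (2:ℕ)^(N-i) = 2 * 2^(N-i-1) := by
    have e : N - i = (N-i-1)+1 := by omega
    calc (2:ℕ)^(N-i) = 2^((N-i-1)+1) := congrArg (fun x => 2^x) e
      _ = 2 * 2^(N-i-1) := by rw [pow_succ]; ring
  have hpow2 : (2:ℕ)^(N-i+1) = 2 * 2^(N-i) := by rw [pow_succ]; ring
  have hq0a : 2^(N-i) ≤ 2*p := by omega
  have hq0b : 2*p < 2^(N-i+1) := by omega
  have hq1a : 2^(N-i) ≤ 2*p+1 := by omega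
  have hq1b : 2*p+1 < 2^(N-i+1) := by omega
  have hiN : i ≤ N := le_of_lt hi
  have sh00 := yq_shell_zero (q := 2*p) hq0b hiN
  have sh01 := yq_shell_one hq0a hq0b hiN
  have sh10 := yq_shell_zero (q := 2*p+1) hq1b hiN
  have sh11 := yq_shell_one hq1a hq1b hiN
  rw [Dconj_shell hi sh00 sh01, Dconj_shell hi sh10 sh11, yq_flip h1 h2 p]
  set ε := 1 - 2 * (tdig t (N+1) : ℝ) with hε
  set w := walsh n (yq N (2*p)) with hw
  set a := ε * w * gR n i with ha
  set b := 2 * gR (mOf t N) i with hb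
  have h2nd : ε * -w * gR n i - b = -(a + b) := by rw [ha]; ring
  rw [h2nd, abs_neg, abs_pair a b]
  have haa : |a| = (alpha n i : ℝ) := by
    rw [ha, abs_mul, abs_mul, eps_abs, abs_walsh, abs_gR]
    ring
  have hbb : |b| = 2 * (alpha (mOf t N) i : ℝ) := by
    rw [hb, abs_mul, abs_gR]
    norm_num
  rw [haa, hbb]
lemma measurable_walsh (k : ℕ) : Measurable (walsh k) := by
  unfold walsh
  refine Finset.measurable_prod _ fun l _ => ?_
  by_cases hb : k.testBit l
  · simp only [hb, if_true]
    exact (measurable_of_countable (fun z : ZMod 2 => (-1:ℝ)^z.val)).comp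
      (measurable_pi_apply l)
  · simp only [hb, if_false]
    exact measurable_const

lemma measurable_Dir (k : ℕ) : Measurable (Dir k) := by
  unfold Dir
  exact Finset.measurable_sum _ fun l _ => measurable_walsh l

lemma measurable_Dconj (t : ℝ) (N n : ℕ) : Measurable (Dconj t N n) := by
  unfold Dconj
  exact (((measurable_Dir n).sub (((measurable_const.mul (measurable_walsh _))).mul
    (measurable_Dir _))).sub
    (measurable_const.mul ((measurable_Dir n).sub (measurable_Dir _))))

lemma measurable_toG : Measurable toG := by
  unfold toG
  refine measurable_pi_lambda _ fun n => ?_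
  exact (measurable_of_countable (fun z : ℤ => (z : ZMod 2))).comp
    ((measurable_id.mul_const _).floor)

lemma measurableSet_Iset (n : ℕ) : MeasurableSet (Iset n) := by
  have h : Iset n = ⋂ l ∈ Finset.range n, (fun y : G => y l) ⁻¹' {0} := by
    ext y
    simp [Iset]
  rw [h]
  exact MeasurableSet.biInter (Set.to_countable _) fun l _ =>
    (measurable_pi_apply l) (measurableSet_singleton 0)

lemma floor_piece {Q q k : ℕ} (hk : k < Q) {x : ℝ}
    (hx1 : (q:ℝ)/2^Q ≤ x) (hx2 : x < ((q:ℝ)+1)/2^Q) :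
    ⌊x * 2^(k+1)⌋ = (q / 2^(Q-(k+1)) : ℕ) := by
  set M : ℕ := 2^(Q-(k+1)) with hM
  have hMpos : 0 < M := Nat.pow_pos (by norm_num)
  have hMR : (0:ℝ) < M := by exact_mod_cast hMpos
  have hQeq : (2:ℝ)^Q = (M:ℝ) * 2^(k+1) := by
    have e : Q = (Q-(k+1)) + (k+1) := by omega
    have : (2:ℝ)^Q = 2^((Q-(k+1)) + (k+1)) := congrArg (fun s => (2:ℝ)^s) e
    rw [this, pow_add, hM]
    push_cast
    ring
  have hdm := Nat.div_add_mod q M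
  have hmod := Nat.mod_lt q hMpos
  have h2Q : (0:ℝ) < 2^Q := by positivity
  have key1 : ((q / M : ℕ) : ℝ) ≤ x * 2^(k+1) := by
    have hA : ((q/M : ℕ):ℝ) ≤ (q:ℝ)/(M:ℝ) := by
      rw [le_div_iff₀ hMR]
      exact_mod_cast Nat.div_mul_le_self q M
    have hB : (q:ℝ)/(M:ℝ) ≤ x * 2^(k+1) := by
      rw [div_le_iff₀ hMR]
      have h := (div_le_iff₀ h2Q).1 hx1
      calc (q:ℝ) ≤ x * 2^Q := h
        _ = x * 2^(k+1) * M := by rw [hQeq]; ring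
    linarith
  have key2 : x * 2^(k+1) < ((q/M : ℕ):ℝ) + 1 := by
    have hA : x * 2^(k+1) < ((q:ℝ)+1)/(M:ℝ) := by
      rw [lt_div_iff₀ hMR]
      have h := (lt_div_iff₀ h2Q).1 hx2
      calc x * 2^(k+1) * M = x * 2^Q := by rw [hQeq]; ring
        _ < (q:ℝ)+1 := h
    have hB : ((q:ℝ)+1)/(M:ℝ) ≤ ((q/M:ℕ):ℝ) + 1 := by
      rw [div_le_iff₀ hMR]
      have hn : q + 1 ≤ M * (q/M) + M := by omega
      calc (q:ℝ)+1 ≤ (M:ℝ)*((q/M:ℕ):ℝ) + M := by exact_mod_cast hn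
        _ = (((q/M:ℕ):ℝ)+1)*M := by ring
    linarith
  rw [Int.floor_eq_iff]
  constructor
  · exact_mod_cast key1
  · push_cast
    exact key2

lemma toG_piece {N q : ℕ} {x : ℝ}
    (hx1 : (q:ℝ)/2^(N+1) ≤ x) (hx2 : x < ((q:ℝ)+1)/2^(N+1)) :
    ∀ k ≤ N, toG x k = yq N q k := by
  intro k hk
  unfold toG yq
  rw [if_pos hk, floor_piece (show k < N+1 by omega) hx1 hx2]
  have e : N + 1 - (k+1) = N - k := by omega
  rw [e]
  have hb : bit q (N-k) = q / 2^(N-k) % 2 := by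
    unfold bit
    rw [Nat.testBit_eq_decide_div_mod_eq]
    rcases Nat.mod_two_eq_zero_or_one (q / 2^(N-k)) with h | h <;> simp [h]
  rw [Int.cast_natCast, hb, ZMod.natCast_mod]
lemma digits_zero_lt {x : ℝ} (hx0 : 0 ≤ x) (hx1 : x < 1) {k : ℕ}
    (h : ∀ l < k, toG x l = 0) : x < ((2:ℝ)^k)⁻¹ := by
  induction k with
  | zero => simpa using hx1
  | succ k ih =>
    have hxk : x < ((2:ℝ)^k)⁻¹ := ih fun l hl => h l (by omega)
    have hd := h k (Nat.lt_succ_self k)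
    unfold toG at hd
    have hdvd : (2:ℤ) ∣ ⌊x * 2^(k+1)⌋ := by
      have h2 := (ZMod.intCast_zmod_eq_zero_iff_dvd _ 2).1 hd
      exact_mod_cast h2
    have h0 : 0 ≤ x * 2^(k+1) := by positivity
    have h2 : x * 2^(k+1) < 2 := by
      have hlt : x * 2^(k+1) < ((2:ℝ)^k)⁻¹ * 2^(k+1) :=
        mul_lt_mul_of_pos_right hxk (by positivity)
      have he : ((2:ℝ)^k)⁻¹ * 2^(k+1) = 2 := by
        rw [pow_succ]; field_simp
      linarith
    have hfl : ⌊x*2^(k+1)⌋ = 0 := by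
      have l1 : 0 ≤ ⌊x*2^(k+1)⌋ := Int.floor_nonneg.2 h0
      have l2 : ⌊x*2^(k+1)⌋ < 2 := Int.floor_lt.2 (by push_cast; exact h2)
      omega
    have hlt1 : x * 2^(k+1) < 1 := (Int.floor_eq_zero_iff.1 hfl).2
    rw [inv_eq_one_div, lt_div_iff₀ (by positivity)]
    linarith

lemma preimage_shell (i : ℕ) :
    toG ⁻¹' (Iset i \ Iset (i+1)) ∩ Set.Ico (0:ℝ) 1
      = Set.Ico ((2:ℝ)^(i+1))⁻¹ ((2:ℝ)^i)⁻¹ := by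
  ext x
  simp only [Set.mem_inter_iff, Set.mem_preimage, Set.mem_diff, Set.mem_Ico, Iset,
    Set.mem_setOf_eq]
  constructor
  · rintro ⟨⟨hall, hnot⟩, hx0, hx1⟩
    have hdig : toG x i ≠ 0 := by
      intro hc
      exact hnot fun l hl => by
        rcases Nat.lt_succ_iff_lt_or_eq.1 hl with h' | h'
        · exact hall l h'
        · rw [h']; exact hc
    have hxi : x < ((2:ℝ)^i)⁻¹ := digits_zero_lt hx0 hx1 hall
    refine ⟨?_, hxi⟩
    by_contra hc
    push_neg at hc
    have h0 : 0 ≤ x * 2^(i+1) := by positivity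
    have h2 : x * 2^(i+1) < 2 := by
      have hlt : x * 2^(i+1) < ((2:ℝ)^i)⁻¹ * 2^(i+1) :=
        mul_lt_mul_of_pos_right hxi (by positivity)
      have he : ((2:ℝ)^i)⁻¹ * 2^(i+1) = 2 := by rw [pow_succ]; field_simp
      linarith
    have h1 : x * 2^(i+1) < 1 := by
      have : x < ((2:ℝ)^(i+1))⁻¹ := hc
      have hlt : x * 2^(i+1) < ((2:ℝ)^(i+1))⁻¹ * 2^(i+1) :=
        mul_lt_mul_of_pos_right this (by positivity)
      have he : ((2:ℝ)^(i+1))⁻¹ * 2^(i+1) = 1 := by field_simp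
      linarith
    have hfl : ⌊x*2^(i+1)⌋ = 0 := by
      have l1 : 0 ≤ ⌊x*2^(i+1)⌋ := Int.floor_nonneg.2 h0
      have l2 : ⌊x*2^(i+1)⌋ < 1 := Int.floor_lt.2 (by push_cast; exact h1)
      omega
    apply hdig
    unfold toG
    rw [hfl]
    rfl
  · rintro ⟨hx1, hx2⟩
    have h2pos : (0:ℝ) < (2:ℝ)^(i+1) := by positivity
    have hx0 : (0:ℝ) ≤ x := le_trans (by positivity) hx1
    have hxlt1 : x < 1 := lt_of_lt_of_le hx2 (by
      rw [inv_le_one_iff₀]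
      right
      exact one_le_pow₀ (by norm_num))
    have hall : ∀ l < i, toG x l = 0 := by
      intro l hl
      unfold toG
      have h0 : 0 ≤ x * 2^(l+1) := by positivity
      have hlt : x * 2^(l+1) < 1 := by
        have hle : (2:ℝ)^(l+1) ≤ 2^i := pow_le_pow_right₀ (by norm_num) (by omega)
        have ha : x * 2^(l+1) ≤ x * 2^i := mul_le_mul_of_nonneg_left hle hx0
        have hb : x * 2^i < ((2:ℝ)^i)⁻¹ * 2^i := mul_lt_mul_of_pos_right hx2 (by positivity)
        have he : ((2:ℝ)^i)⁻¹ * 2^i = 1 := by field_simp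
        linarith
      have hfl : ⌊x*2^(l+1)⌋ = 0 := by
        have l1 : 0 ≤ ⌊x*2^(l+1)⌋ := Int.floor_nonneg.2 h0
        have l2 : ⌊x*2^(l+1)⌋ < 1 := Int.floor_lt.2 (by push_cast; exact hlt)
        omega
      rw [hfl]
      rfl
    refine ⟨⟨hall, ?_⟩, hx0, hxlt1⟩
    intro hc
    have hd := hc i (Nat.lt_succ_self i)
    unfold toG at hd
    have hfl : ⌊x*2^(i+1)⌋ = 1 := by
      have l1 : 1 ≤ x * 2^(i+1) := by
        have := mul_le_mul_of_nonneg_right hx1 (le_of_lt h2pos)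
        have he : ((2:ℝ)^(i+1))⁻¹ * 2^(i+1) = 1 := by field_simp
        linarith
      have l2 : x * 2^(i+1) < 2 := by
        have hlt := mul_lt_mul_of_pos_right hx2 h2pos
        have he : ((2:ℝ)^i)⁻¹ * 2^(i+1) = 2 := by rw [pow_succ]; field_simp
        linarith
      have f1 : 1 ≤ ⌊x*2^(i+1)⌋ := Int.le_floor.2 (by push_cast; exact l1)
      have f2 : ⌊x*2^(i+1)⌋ < 2 := Int.floor_lt.2 (by push_cast; exact l2)
      omega
    rw [hfl] at hd
    exact absurd hd (by decide)
lemma Dir_bound (k : ℕ) (y : G) : |Dir k y| ≤ k := by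
  unfold Dir
  calc |∑ l ∈ Finset.range k, walsh l y| ≤ ∑ l ∈ Finset.range k, |walsh l y| :=
        Finset.abs_sum_le_sum_abs _ _
    _ = ∑ l ∈ Finset.range k, 1 := by
        exact Finset.sum_congr rfl fun l _ => abs_walsh l y
    _ = k := by simp

lemma Dconj_bound (t : ℝ) (N n : ℕ) (y : G) :
    |Dconj t N n y| ≤ (n:ℝ) + 2 * (mOf t N) + 2 * ((n:ℝ) + (2^N : ℕ)) := by
  have h1 := Dir_bound n y
  have h2 := Dir_bound (mOf t N) y
  have h3 := Dir_bound (2^N) y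
  have hw := abs_walsh (mOf t N) y
  have htd0 : (0:ℝ) ≤ (tdig t (N+1) : ℝ) := Nat.cast_nonneg _
  have htd1 : (tdig t (N+1) : ℝ) ≤ 1 := by exact_mod_cast tdig_le_one t (N+1)
  unfold Dconj
  have e1 : |2 * walsh (mOf t N) y * Dir (mOf t N) y| ≤ 2 * (mOf t N) := by
    rw [abs_mul, abs_mul, hw]
    norm_num
    exact h2
  have e2 : |2 * (tdig t (N+1) : ℝ) * (Dir n y - Dir (2^N) y)| ≤ 2 * ((n:ℝ) + (2^N:ℕ)) := by
    rw [abs_mul, abs_mul]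
    have habs : |Dir n y - Dir (2^N) y| ≤ (n:ℝ) + (2^N:ℕ) := by
      rcases abs_cases (Dir n y - Dir (2^N) y) with ⟨ha, _⟩ | ⟨ha, _⟩ <;>
        rcases abs_cases (Dir n y) with ⟨hb, _⟩ | ⟨hb, _⟩ <;>
          rcases abs_cases (Dir (2^N) y) with ⟨hc, _⟩ | ⟨hc, _⟩ <;>
            rw [ha] <;> linarith
    have h2' : |(2:ℝ)| = 2 := by norm_num
    rw [h2', abs_of_nonneg htd0]
    nlinarith [abs_nonneg (Dir n y - Dir (2^N) y)]
  rcases abs_cases (Dir n y - 2 * walsh (mOf t N) y * Dir (mOf t N) y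
      - 2 * (tdig t (N+1) : ℝ) * (Dir n y - Dir (2^N) y)) with ⟨ha, _⟩ | ⟨ha, _⟩ <;>
    rcases abs_cases (Dir n y) with ⟨hb, _⟩ | ⟨hb, _⟩ <;>
      rcases abs_cases (2 * walsh (mOf t N) y * Dir (mOf t N) y) with ⟨hc, _⟩ | ⟨hc, _⟩ <;>
        rcases abs_cases (2 * (tdig t (N+1) : ℝ) * (Dir n y - Dir (2^N) y)) with ⟨hd, _⟩ | ⟨hd, _⟩ <;>
          rw [ha] <;> linarith

lemma integrableOn_piece (t : ℝ) (N n : ℕ) (a b : ℝ) :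
    IntegrableOn (fun x => |Dconj t N n (toG x)|) (Set.Ico a b) volume := by
  apply Measure.integrableOn_of_bounded
    (M := (n:ℝ) + 2 * (mOf t N) + 2 * ((n:ℝ) + (2^N : ℕ)))
  · rw [Real.volume_Ico]
    exact ENNReal.ofReal_ne_top
  · exact (((measurable_Dconj t N n).comp measurable_toG).abs).aestronglyMeasurable
  · filter_upwards with x
    rw [Real.norm_eq_abs, abs_abs]
    exact Dconj_bound t N n (toG x)

lemma integral_Ico_split (F : ℝ → ℝ) {h : ℝ} (hh : 0 ≤ h) (c : ℕ) (d : ℕ) (hcd : c ≤ d)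
    (hint : ∀ a b : ℝ, IntegrableOn F (Set.Ico a b) volume) :
    ∫ x in Set.Ico ((c:ℝ)*h) ((d:ℝ)*h), F x
      = ∑ q ∈ Finset.Ico c d, ∫ x in Set.Ico ((q:ℝ)*h) (((q:ℝ)+1)*h), F x := by
  induction d, hcd using Nat.le_induction with
  | base => simp
  | succ d hcd ih =>
    have hcast : ((d:ℕ)+1 : ℕ) = d + 1 := rfl
    have hcd' : (c:ℝ)*h ≤ (d:ℝ)*h := by
      apply mul_le_mul_of_nonneg_right _ hh
      exact_mod_cast hcd
    have hdd : (d:ℝ)*h ≤ ((d:ℝ)+1)*h := by nlinarith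
    have hdisj : Disjoint (Set.Ico ((c:ℝ)*h) ((d:ℝ)*h)) (Set.Ico ((d:ℝ)*h) (((d:ℝ)+1)*h)) := by
      apply Set.disjoint_left.2
      rintro x ⟨_, hx2⟩ ⟨hx3, _⟩
      exact absurd hx3 (not_le.2 hx2)
    have e : ((d+1 : ℕ) : ℝ) = (d:ℝ)+1 := by push_cast; ring
    rw [e, ← Set.Ico_union_Ico_eq_Ico hcd' hdd,
      setIntegral_union hdisj measurableSet_Ico (hint _ _) (hint _ _),
      Finset.sum_Ico_succ_top hcd, ih]

lemma sum_Ico_pair (g : ℕ → ℝ) (a b : ℕ) :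
    ∑ q ∈ Finset.Ico (2*a) (2*b), g q
      = ∑ p ∈ Finset.Ico a b, (g (2*p) + g (2*p+1)) := by
  rcases le_or_gt a b with hab | hab
  · induction b, hab using Nat.le_induction with
    | base => simp
    | succ b hab ih =>
      have e : 2*(b+1) = (2*b+1)+1 := by ring
      rw [Finset.sum_Ico_succ_top hab, ← ih, e,
        Finset.sum_Ico_succ_top (by omega), Finset.sum_Ico_succ_top (by omega)]
      ring
  · rw [Finset.Ico_eq_empty (by omega), Finset.Ico_eq_empty (by omega)]
    simp

lemma piece_integral (t : ℝ) {N n : ℕ} (h2 : n < 2^(N+1)) (q : ℕ) :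
    ∫ x in Set.Ico ((q:ℝ)*((2:ℝ)^(N+1))⁻¹) (((q:ℝ)+1)*((2:ℝ)^(N+1))⁻¹),
        |Dconj t N n (toG x)|
      = ((2:ℝ)^(N+1))⁻¹ * |Dconj t N n (yq N q)| := by
  have hconst : Set.EqOn (fun x => |Dconj t N n (toG x)|)
      (fun _ => |Dconj t N n (yq N q)|)
      (Set.Ico ((q:ℝ)*((2:ℝ)^(N+1))⁻¹) (((q:ℝ)+1)*((2:ℝ)^(N+1))⁻¹)) := by
    rintro x ⟨hx1, hx2⟩
    have hd1 : (q:ℝ)/2^(N+1) ≤ x := by rw [div_eq_mul_inv]; exact hx1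
    have hd2 : x < ((q:ℝ)+1)/2^(N+1) := by rw [div_eq_mul_inv]; exact hx2
    simp only
    rw [Dconj_congr h2 (toG_piece hd1 hd2)]
  rw [setIntegral_congr_fun measurableSet_Ico hconst, setIntegral_const, measureReal_def, Real.volume_Ico]
  have e : ((q:ℝ)+1)*((2:ℝ)^(N+1))⁻¹ - (q:ℝ)*((2:ℝ)^(N+1))⁻¹ = ((2:ℝ)^(N+1))⁻¹ := by
    ring
  rw [e, ENNReal.toReal_ofReal (by positivity), smul_eq_mul]
/-- `∫_{I_i \ I_{i+1}} |D̃_n^{(t)}| dμ = max(α_i(n), 2α_i(m))/2^{i+1}`. -/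
theorem integral_Dconj_on_shell (t : ℝ) (ht : t ∈ Set.Ico (0:ℝ) 1) (N n : ℕ)
    (h1 : 2^N ≤ n) (h2 : n < 2^(N+1)) (i : ℕ) (hi : i < N) :
    ∫ x in Iset i \ Iset (i+1), |Dconj t N n x| ∂muG
      = max (alpha n i : ℝ) (2 * (alpha (mOf t N) i : ℝ)) / 2^(i+1) := by
  have hmeas_set : MeasurableSet (Iset i \ Iset (i+1)) :=
    (measurableSet_Iset i).diff (measurableSet_Iset (i+1))
  have haesm : AEStronglyMeasurable (fun y => |Dconj t N n y|)
      ((volume.restrict (Set.Ico (0:ℝ) 1)).map toG) :=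
    ((measurable_Dconj t N n).abs).aestronglyMeasurable
  rw [show muG = (volume.restrict (Set.Ico (0:ℝ) 1)).map toG from rfl,
    setIntegral_map hmeas_set haesm measurable_toG.aemeasurable,
    Measure.restrict_restrict (measurable_toG hmeas_set), preimage_shell i]
  set M : ℝ := max (alpha n i : ℝ) (2 * (alpha (mOf t N) i : ℝ)) with hM
  have hc : ((2^(N-i) : ℕ) : ℝ) * ((2:ℝ)^(N+1))⁻¹ = ((2:ℝ)^(i+1))⁻¹ := by
    have hcast : ((2^(N-i) : ℕ) : ℝ) = (2:ℝ)^(N-i) := by push_cast; ring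
    have hkey : (2:ℝ)^(N-i) * 2^(i+1) = 2^(N+1) := by
      rw [← pow_add]
      exact congrArg (fun s => (2:ℝ)^s) (by omega)
    rw [hcast]
    field_simp
    linarith [hkey]
  have hd : ((2^(N+1-i) : ℕ) : ℝ) * ((2:ℝ)^(N+1))⁻¹ = ((2:ℝ)^i)⁻¹ := by
    have hcast : ((2^(N+1-i) : ℕ) : ℝ) = (2:ℝ)^(N+1-i) := by push_cast; ring
    have hkey : (2:ℝ)^(N+1-i) * 2^i = 2^(N+1) := by
      rw [← pow_add]
      exact congrArg (fun s => (2:ℝ)^s) (by omega)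
    rw [hcast]
    field_simp
    linarith [hkey]
  rw [← hc, ← hd,
    integral_Ico_split _ (by positivity) _ _
      (Nat.pow_le_pow_right (by norm_num) (by omega)) (integrableOn_piece t N n),
    Finset.sum_congr rfl (fun q _ => piece_integral t h2 q)]
  have ec : (2:ℕ)^(N-i) = 2 * 2^(N-i-1) := by
    have e : N - i = (N-i-1)+1 := by omega
    calc (2:ℕ)^(N-i) = 2^((N-i-1)+1) := congrArg (fun x => 2^x) e
      _ = 2 * 2^(N-i-1) := by rw [pow_succ]; ring
  have ed : (2:ℕ)^(N+1-i) = 2 * 2^(N-i) := by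
    have e : N + 1 - i = (N-i)+1 := by omega
    calc (2:ℕ)^(N+1-i) = 2^((N-i)+1) := congrArg (fun x => 2^x) e
      _ = 2 * 2^(N-i) := by rw [pow_succ]; ring
  rw [ec, ed, sum_Ico_pair,
    Finset.sum_congr rfl (fun p hp => by
      obtain ⟨hp1, hp2⟩ := Finset.mem_Ico.1 hp
      rw [← mul_add, pair_eq t h1 h2 hi hp1 hp2, ← hM]),
    Finset.sum_const, Nat.card_Ico]
  have ecard : 2^(N-i) - 2^(N-i-1) = 2^(N-i-1) := by omega
  rw [ecard, nsmul_eq_mul]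
  have hcast : ((2^(N-i-1) : ℕ) : ℝ) = (2:ℝ)^(N-i-1) := by push_cast; ring
  have hkey : (2:ℝ)^(N-i-1) * 2 * 2^(i+1) = 2^(N+1) := by
    rw [show (2:ℝ)^(N-i-1) * 2 = 2^((N-i-1)+1) by rw [pow_succ], ← pow_add]
    exact congrArg (fun s => (2:ℝ)^s) (by omega)
  rw [hcast]
  have h2pos : (0:ℝ) < 2^(N+1) := by positivity
  have h2pos' : (0:ℝ) < 2^(i+1) := by positivity
  field_simp
  linarith [congrArg (fun s => s * M) hkey]
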